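/- For all 1 ≤ i, j ≤ q, the identity M_{i,j} = B_{i,j} + Σ_{k=1}^{min(i,j)−1} M_{i,k} M_{k,j} holds in A (the terms of M_{i,j} grouped according to the highest element of the admissible sequence; for i = j this reads C_{i,i} = B_{i,i} + Σ_{k=1}^{i−1} M_{i,k} M_{k,i}). -/
import Mathlib


open scoped BigOperators

/-- A finite sequence of positive integers is *admissible* if between any two
occurrences of a number `s` there is an entry greater than `s`. -/
def IsAdmissible (l : List ℕ) : Prop :=
  ∀ (l₁ l₂ l₃ : List ℕ) (s : ℕ), l = l₁ ++ s :: (l₂ ++ s :: l₃) → ∃ t ∈ l₂, s < t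

/-- `Dset n` is the set of admissible sequences all of whose entries lie in
`{1, …, n-1}` (including the empty sequence). -/
def Dset (n : ℕ) : Set (List ℕ) :=
  {l | IsAdmissible l ∧ ∀ x ∈ l, 1 ≤ x ∧ x < n}

/-- The product `B i i₁ * B i₁ i₂ * ⋯ * B i_c j` along a sequence `[i₁, …, i_c]`;
the empty sequence contributes `B i j`. -/
def pathProd {A : Type*} [Ring A] (B : ℕ → ℕ → A) (i j : ℕ) : List ℕ → A
  | [] => B i j
  | a :: l => B i a * pathProd B a j l

/-- `M i j = Σ_{(i₁,…,i_c) ∈ D_{min(i,j)}} B i i₁ ⋯ B i_c j`. -/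
noncomputable def Mpoly {A : Type*} [Ring A] (B : ℕ → ℕ → A) (i j : ℕ) : A :=
  ∑ᶠ l ∈ Dset (min i j), pathProd B i j l

/-- `C i j` for `i < j` sums `B i i₁ ⋯ B i_c j` over sequences with
`(i, i₁, …, i_c) ∈ D_j`; and `C n n = M n n`. -/
noncomputable def Cpoly {A : Type*} [Ring A] (B : ℕ → ℕ → A) (i j : ℕ) : A :=
  if i = j then Mpoly B i j
  else ∑ᶠ l ∈ {l : List ℕ | (i :: l) ∈ Dset j}, pathProd B i j l

/-- The generators `B_{i,j}` of the free noncommutative unital ℤ-algebra. -/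
noncomputable def Bgen : ℕ → ℕ → FreeAlgebra ℤ (ℕ × ℕ) :=
  fun i j => FreeAlgebra.ι ℤ (i, j)

/-- The commuting indeterminates `B_{i,j}` of the polynomial ring `ℤ[B_{i,j}]`. -/
noncomputable def Bcomm : ℕ → ℕ → MvPolynomial (ℕ × ℕ) ℤ :=
  fun i j => MvPolynomial.X (i, j)

lemma isAdmissible_nil : IsAdmissible [] := by
  intro l₁ l₂ l₃ s h
  simp at h

lemma isAdmissible_of_append {p l post : List ℕ} (h : IsAdmissible (p ++ l ++ post)) :
    IsAdmissible l := by
  intro l₁ l₂ l₃ s hl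
  apply h (p ++ l₁) l₂ (l₃ ++ post) s
  subst hl; simp [List.append_assoc]

lemma isAdmissible_append_cons {l₁ l₂ : List ℕ} {k : ℕ}
    (h₁ : IsAdmissible l₁) (h₂ : IsAdmissible l₂)
    (hk₁ : ∀ x ∈ l₁, x < k) (hk₂ : ∀ x ∈ l₂, x < k) :
    IsAdmissible (l₁ ++ k :: l₂) := by
  intro a b c s h
  rcases List.append_eq_append_iff.mp h.symm with ⟨a', ha, hb⟩ | ⟨c', hc, hd⟩
  · -- ha : l₁ = a ++ a', hb : s :: (b ++ s :: c) = a' ++ k :: l₂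
    match a', ha, hb with
    | [], ha, hb =>
      simp only [List.nil_append, List.cons.injEq] at hb
      obtain ⟨hs, hl⟩ := hb
      exact absurd (hk₂ s (by rw [← hl]; subst hs; simp)) (by omega)
    | (x :: a''), ha, hb =>
      simp only [List.cons_append, List.cons.injEq] at hb
      obtain ⟨hx, hb⟩ := hb
      have hsk : s < k := by
        have : x ∈ l₁ := by rw [ha]; simp
        have := hk₁ x this; omega
      rcases List.append_eq_append_iff.mp hb with ⟨d, hd1, hd2⟩ | ⟨e, he1, he2⟩
      · -- hd1 : a'' = b ++ d, hd2 : s :: c = d ++ k :: l₂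
        match d, hd2 with
        | [], hd2 =>
          simp only [List.nil_append, List.cons.injEq] at hd2
          omega
        | (y :: d'), hd2 =>
          simp only [List.cons_append, List.cons.injEq] at hd2
          obtain ⟨hy, -⟩ := hd2
          exact h₁ a b d' s (by rw [ha, hd1, ← hx, ← hy])
      · -- he1 : b = a'' ++ e, he2 : k :: l₂ = e ++ s :: c
        match e, he2 with
        | [], he2 =>
          simp only [List.nil_append, List.cons.injEq] at he2
          omega
        | (z :: e'), he2 =>
          simp only [List.cons_append, List.cons.injEq] at he2
          exact ⟨z, by rw [he1]; simp, by omega⟩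
  · -- hc : a = l₁ ++ c', hd : k :: l₂ = c' ++ s :: (b ++ s :: c)
    match c', hd with
    | [], hd =>
      simp only [List.nil_append, List.cons.injEq] at hd
      obtain ⟨hs, hl⟩ := hd
      exact absurd (hk₂ s (by rw [hl]; simp)) (by omega)
    | (w :: c''), hd =>
      simp only [List.cons_append, List.cons.injEq] at hd
      exact h₂ c'' b c s hd.2

lemma first_occ {a : ℕ} {l : List ℕ} (h : a ∈ l) : ∃ s t, l = s ++ a :: t ∧ a ∉ s := by
  induction l with
  | nil => simp at h
  | cons x l ih =>
    by_cases hx : x = a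
    · exact ⟨[], l, by simp [hx], by simp⟩
    · rcases ih ((List.mem_cons.mp h).resolve_left (fun he => hx he.symm)) with ⟨s, t, h1, h2⟩
      exact ⟨x :: s, t, by rw [h1]; simp, by simp [h2]; omega⟩

lemma split_unique {k : ℕ} : ∀ {l₁ l₁' l₂ l₂' : List ℕ}, k ∉ l₁ → k ∉ l₁' →
    l₁ ++ k :: l₂ = l₁' ++ k :: l₂' → l₁ = l₁' ∧ l₂ = l₂' := by
  intro l₁
  induction l₁ with
  | nil =>
    intro l₁' l₂ l₂' h1 h2 h
    match l₁', h with
    | [], h => simpa using h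
    | (x :: l₁''), h =>
      simp only [List.nil_append, List.cons_append, List.cons.injEq] at h
      exact absurd (by rw [h.1]; simp) h2
  | cons x l₁ ih =>
    intro l₁' l₂ l₂' h1 h2 h
    match l₁', h with
    | [], h =>
      simp only [List.cons_append, List.nil_append, List.cons.injEq] at h
      exact absurd (by rw [← h.1]; simp) h1
    | (y :: l₁''), h =>
      simp only [List.cons_append, List.cons.injEq] at h
      obtain ⟨hxy, h⟩ := h
      rcases ih (by simp at h1; tauto) (by simp at h2; tauto) h with ⟨e1, e2⟩
      exact ⟨by rw [hxy, e1], e2⟩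

lemma Dset_zero : Dset 0 = {[]} := by
  ext l
  constructor
  · rintro ⟨h1, h2⟩
    cases l with
    | nil => rfl
    | cons x l => exact absurd (h2 x (by simp)) (by omega)
  · rintro rfl
    exact ⟨isAdmissible_nil, by simp⟩

lemma Dset_one : Dset 1 = {[]} := by
  ext l
  constructor
  · rintro ⟨h1, h2⟩
    cases l with
    | nil => rfl
    | cons x l => exact absurd (h2 x (by simp)) (by omega)
  · rintro rfl
    exact ⟨isAdmissible_nil, by simp⟩

lemma Dset_succ {n : ℕ} (hn : 1 ≤ n) :
    Dset (n + 1) = Dset n ∪ (fun p : List ℕ × List ℕ => p.1 ++ n :: p.2) '' (Dset n ×ˢ Dset n) := by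
  ext l
  constructor
  · rintro ⟨h1, h2⟩
    by_cases hm : n ∈ l
    · right
      rcases first_occ hm with ⟨s, t, rfl, hns⟩
      have hnt : n ∉ t := by
        intro hnt
        rcases List.append_of_mem hnt with ⟨u, v, rfl⟩
        rcases h1 s u v n rfl with ⟨w, hw1, hw2⟩
        have := h2 w (by simp [hw1])
        omega
      refine ⟨(s, t), ⟨⟨isAdmissible_of_append (p := []) (post := n :: t) (by simpa using h1),
        fun x hx => ?_⟩, ⟨isAdmissible_of_append (p := s ++ [n]) (post := []) (by simpa using h1),
        fun x hx => ?_⟩⟩, rfl⟩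
      · have := h2 x (by simp [hx])
        have : x ≠ n := fun h => hns (h ▸ hx)
        have := h2 x (by simp [hx]); omega
      · have := h2 x (by simp [hx])
        have : x ≠ n := fun h => hnt (h ▸ hx)
        have := h2 x (by simp [hx]); omega
    · left
      refine ⟨h1, fun x hx => ?_⟩
      have := h2 x hx
      have : x ≠ n := fun h => hm (h ▸ hx)
      omega
  · rintro (⟨h1, h2⟩ | ⟨⟨s, t⟩, ⟨⟨hs1, hs2⟩, ⟨ht1, ht2⟩⟩, rfl⟩)
    · exact ⟨h1, fun x hx => by have := h2 x hx; omega⟩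
    · refine ⟨isAdmissible_append_cons hs1 ht1 (fun x hx => (hs2 x hx).2)
        (fun x hx => (ht2 x hx).2), fun x hx => ?_⟩
      simp only [List.mem_append, List.mem_cons] at hx
      rcases hx with hx | rfl | hx
      · have := hs2 x hx; omega
      · omega
      · have := ht2 x hx; omega

lemma Dset_finite (n : ℕ) : (Dset n).Finite := by
  induction n with
  | zero => rw [Dset_zero]; exact Set.finite_singleton _
  | succ n ih =>
    rcases Nat.eq_zero_or_pos n with rfl | hn
    · rw [Dset_one]; exact Set.finite_singleton _
    · rw [Dset_succ hn]
      exact ih.union ((ih.prod ih).image _)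

lemma pathProd_append {A : Type*} [Ring A] (B : ℕ → ℕ → A) (i j k : ℕ) (l₁ l₂ : List ℕ) :
    pathProd B i j (l₁ ++ k :: l₂) = pathProd B i k l₁ * pathProd B k j l₂ := by
  induction l₁ generalizing i with
  | nil => simp [pathProd]
  | cons a l ih => simp [pathProd, ih, mul_assoc]

noncomputable def Ssum {A : Type*} [Ring A] (B : ℕ → ℕ → A) (i j n : ℕ) : A :=
  ∑ᶠ l ∈ Dset n, pathProd B i j l

lemma Ssum_one {A : Type*} [Ring A] (B : ℕ → ℕ → A) (i j : ℕ) : Ssum B i j 1 = B i j := by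
  rw [Ssum, Dset_one, finsum_mem_singleton]; rfl

lemma not_mem_of_Dset {n : ℕ} {l : List ℕ} (h : l ∈ Dset n) : n ∉ l :=
  fun hn => absurd (h.2 n hn).2 (lt_irrefl n)

lemma Ssum_succ {A : Type*} [Ring A] (B : ℕ → ℕ → A) (i j n : ℕ) (hn : 1 ≤ n) :
    Ssum B i j (n + 1) = Ssum B i j n + Ssum B i n n * Ssum B n j n := by
  rw [Ssum, Dset_succ hn, finsum_mem_union ?disj (Dset_finite n) ((Dset_finite n).prod (Dset_finite n) |>.image _)]
  case disj =>
    rw [Set.disjoint_left]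
    rintro l hl ⟨⟨s, t⟩, hst, rfl⟩
    exact not_mem_of_Dset hl (by simp)
  congr 1
  rw [finsum_mem_image ?inj]
  case inj =>
    rintro ⟨s, t⟩ hst ⟨s', t'⟩ hst' h
    simp only [Set.mem_prod] at hst hst'
    rcases split_unique (not_mem_of_Dset hst.1) (not_mem_of_Dset hst'.1) h with ⟨e1, e2⟩
    exact Prod.ext e1 e2
  have hfin := (Dset_finite n)
  rw [Ssum, Ssum, finsum_mem_eq_finite_toFinset_sum _ (hfin.prod hfin),
    finsum_mem_eq_finite_toFinset_sum _ hfin, finsum_mem_eq_finite_toFinset_sum _ hfin,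
    Finset.sum_mul_sum,
    show (hfin.prod hfin).toFinset = hfin.toFinset ×ˢ hfin.toFinset by ext p; simp,
    Finset.sum_product]
  simp only [pathProd_append]

lemma Ssum_eq {A : Type*} [Ring A] (B : ℕ → ℕ → A) (i j : ℕ) :
    ∀ m : ℕ, 1 ≤ m →
      Ssum B i j m = B i j + ∑ k ∈ Finset.Ico 1 m, Ssum B i k k * Ssum B k j k := by
  intro m
  induction m with
  | zero => omega
  | succ n ih =>
    intro _
    rcases Nat.eq_zero_or_pos n with rfl | hn
    · simp [Ssum_one]
    · rw [Ssum_succ B i j n hn, ih hn, Finset.sum_Ico_succ_top hn, add_assoc]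

/-- `M_{i,j} = B_{i,j} + Σ_{k=1}^{min(i,j)-1} M_{i,k} M_{k,j}` for `1 ≤ i, j ≤ q`. -/
theorem M_eq_B_add_sum_MM (q i j : ℕ) (hi : 1 ≤ i) (hiq : i ≤ q)
    (hj : 1 ≤ j) (hjq : j ≤ q) :
    Mpoly Bgen i j =
      Bgen i j + ∑ k ∈ Finset.Ico 1 (min i j), Mpoly Bgen i k * Mpoly Bgen k j := by
  have hm : 1 ≤ min i j := le_min hi hj
  have : Mpoly Bgen i j = Ssum Bgen i j (min i j) := rfl
  rw [this, Ssum_eq Bgen i j (min i j) hm]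
  congr 1
  apply Finset.sum_congr rfl
  intro k hk
  simp only [Finset.mem_Ico] at hk
  have h1 : Mpoly Bgen i k = Ssum Bgen i k k := by
    rw [Mpoly, Ssum, min_eq_right (by omega : k ≤ i)]
  have h2 : Mpoly Bgen k j = Ssum Bgen k j k := by
    rw [Mpoly, Ssum, min_eq_left (by omega : k ≤ j)]
  rw [h1, h2]
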